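/- Let α₁ ≠ α₂ be elements of F, m₁, m₂ positive integers with m₁+m₂ = n, and V_G the confluent Vandermonde matrix for (x-α₁)^{m₁}(x-α₂)^{m₂}. Then the (i,j) entry of the first m₁ rows of V_G⁻¹ (1 ≤ i ≤ m₁, 1 ≤ j ≤ n) is a_{ij} = ∑_{p=0}^{m₁-i} (-1)^{m₂+i+j}·C(m₂+p-1, m₂-1)/(α₁-α₂)^{m₂+p} · ∑_{r=0}^{j-1} C(i+p-1, r)·C(m₂, j-1-r)·α₁^{p+i-1-r}·α₂^{m₂-j+1+r}. -/

import Mathlib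

open Polynomial Finset Matrix


lemma neg_one_pow_congr_aux {F : Type*} [Ring F] {a b : ℕ}
    (h : a % 2 = b % 2) : (-1 : F) ^ a = (-1 : F) ^ b := by
  rw [neg_one_pow_eq_pow_mod_two, h, ← neg_one_pow_eq_pow_mod_two]

lemma coeff_one_sub_X_pow {F : Type*} [CommRing F] (N a : ℕ) :
    ((1 - X : F[X]) ^ N).coeff a = (-1 : F) ^ a * (N.choose a : F) := by
  have h : (1 - X : F[X]) = C (-1) * (X + C (-1)) := by
    simp [mul_add, ← C_mul]; ring
  rw [h, mul_pow, ← C_pow, coeff_C_mul, coeff_X_add_C_pow]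
  rcases le_or_gt a N with hle | hlt
  · rw [← mul_assoc, ← pow_add, neg_one_pow_congr_aux (b := a) (by omega)]
  · rw [Nat.choose_eq_zero_of_lt hlt]
    simp

lemma aux_binom {F : Type*} [Field F] (m c : ℕ) (hc : c ≠ 0) :
    ∑ x ∈ Finset.HasAntidiagonal.antidiagonal c,
      ((m + 1).choose x.1 : F) * ((-1 : F) ^ x.2 * ((m + x.2).choose x.2 : F)) = 0 := by
  have hcoe : (((1 - X : F[X]) ^ (m + 1) : F[X]) : PowerSeries F)
      = (1 - PowerSeries.X) ^ (m + 1) := by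
    push_cast
    simp
  have hA : ∀ a, PowerSeries.coeff a ((1 - PowerSeries.X) ^ (m + 1))
      = (-1 : F) ^ a * ((m + 1).choose a : F) := by
    intro a
    rw [← hcoe, Polynomial.coeff_coe, coeff_one_sub_X_pow]
  have key : ((1 - PowerSeries.X : PowerSeries F) ^ (m + 1)) *
      (PowerSeries.mk fun n => ((m + n).choose m : F)) = 1 := by
    rw [mul_comm]
    exact PowerSeries.mk_add_choose_mul_one_sub_pow_eq_one F m
  have h0 := congrArg (PowerSeries.coeff c) key
  rw [PowerSeries.coeff_mul, PowerSeries.coeff_one, if_neg hc] at h0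
  calc ∑ x ∈ Finset.HasAntidiagonal.antidiagonal c,
        ((m + 1).choose x.1 : F) * ((-1 : F) ^ x.2 * ((m + x.2).choose x.2 : F))
      = ∑ x ∈ Finset.HasAntidiagonal.antidiagonal c, (-1 : F) ^ c *
          (((-1 : F) ^ x.1 * ((m + 1).choose x.1 : F)) * ((m + x.2).choose x.2 : F)) := by
        refine Finset.sum_congr rfl fun x hx => ?_
        have hxc : x.1 + x.2 = c := Finset.HasAntidiagonal.mem_antidiagonal.mp hx
        have hs : (-1 : F) ^ x.2 = (-1 : F) ^ c * (-1 : F) ^ x.1 := by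
          rw [← pow_add]
          exact neg_one_pow_congr_aux (by omega)
        rw [hs]; ring
    _ = (-1 : F) ^ c * ∑ x ∈ Finset.HasAntidiagonal.antidiagonal c,
          (PowerSeries.coeff x.1 ((1 - PowerSeries.X) ^ (m + 1))) *
            (PowerSeries.coeff x.2 (PowerSeries.mk fun n => ((m + n).choose m : F))) := by
        rw [← Finset.mul_sum]
        refine congrArg _ (Finset.sum_congr rfl fun x hx => ?_)
        rw [hA, PowerSeries.coeff_mk, Nat.choose_symm_add]
    _ = 0 := by rw [h0, mul_zero]






lemma aux_dvd {F : Type*} [Field F] (d : F) (hd : d ≠ 0) (m : ℕ) (hm : 0 < m) (N : ℕ) :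
    (X : F[X]) ^ N ∣
      (X + C d) ^ m *
        (∑ p ∈ Finset.range N,
          C ((-1 : F) ^ p * ((m - 1 + p).choose p : F) / d ^ (m + p)) * X ^ p) - 1 := by
  rw [Polynomial.X_pow_dvd_iff]
  intro c hcN
  rw [coeff_sub, Polynomial.coeff_mul, Polynomial.coeff_one]
  have hcoeffS : ∀ b < N,
      (∑ p ∈ Finset.range N,
        C ((-1 : F) ^ p * ((m - 1 + p).choose p : F) / d ^ (m + p)) * X ^ p).coeff b
      = (-1 : F) ^ b * ((m - 1 + b).choose b : F) / d ^ (m + b) := by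
    intro b hb
    rw [finset_sum_coeff, Finset.sum_eq_single b]
    · rw [coeff_C_mul, coeff_X_pow, if_pos rfl, mul_one]
    · intro p _ hpb
      rw [coeff_C_mul, coeff_X_pow, if_neg fun h => hpb h.symm, mul_zero]
    · intro h
      exact absurd (Finset.mem_range.mpr hb) h
  have hstep : ∀ x ∈ Finset.HasAntidiagonal.antidiagonal c,
      ((X + C d) ^ m).coeff x.1 *
        (∑ p ∈ Finset.range N,
          C ((-1 : F) ^ p * ((m - 1 + p).choose p : F) / d ^ (m + p)) * X ^ p).coeff x.2
      = (d ^ (m - x.1) * (m.choose x.1 : F)) *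
          ((-1 : F) ^ x.2 * ((m - 1 + x.2).choose x.2 : F) / d ^ (m + x.2)) := by
    intro x hx
    have hxc : x.1 + x.2 = c := Finset.HasAntidiagonal.mem_antidiagonal.mp hx
    rw [coeff_X_add_C_pow, hcoeffS x.2 (by omega)]
  rw [Finset.sum_congr rfl hstep]
  rcases eq_or_ne c 0 with rfl | hc
  · rw [if_pos rfl]
    rw [Finset.Nat.antidiagonal_zero, Finset.sum_singleton]
    simp only [Nat.sub_zero, Nat.add_zero, Nat.choose_zero_right, Nat.choose_self, pow_zero,
      Nat.cast_one, mul_one, one_mul]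
    field_simp
    ring
  · rw [if_neg hc, sub_zero]
    have hstep2 : ∀ x ∈ Finset.HasAntidiagonal.antidiagonal c,
        (d ^ (m - x.1) * (m.choose x.1 : F)) *
          ((-1 : F) ^ x.2 * ((m - 1 + x.2).choose x.2 : F) / d ^ (m + x.2))
        = (d ^ m * (d ^ (m + c))⁻¹) *
            ((m.choose x.1 : F) * ((-1 : F) ^ x.2 * ((m - 1 + x.2).choose x.2 : F))) := by
      intro x hx
      have hxc : x.1 + x.2 = c := Finset.HasAntidiagonal.mem_antidiagonal.mp hx
      rcases le_or_gt x.1 m with h1 | h1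
      · have hpow : d ^ (m - x.1) * (d ^ (m + x.2))⁻¹ = d ^ m * (d ^ (m + c))⁻¹ := by
          field_simp
          rw [← pow_add, ← pow_add]
          congr 1
          omega
        rw [div_eq_mul_inv]
        calc d ^ (m - x.1) * (m.choose x.1 : F) *
              ((-1 : F) ^ x.2 * ((m - 1 + x.2).choose x.2 : F) * (d ^ (m + x.2))⁻¹)
            = (d ^ (m - x.1) * (d ^ (m + x.2))⁻¹) *
              ((m.choose x.1 : F) * ((-1 : F) ^ x.2 * ((m - 1 + x.2).choose x.2 : F))) := by ring
          _ = _ := by rw [hpow]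
      · rw [Nat.choose_eq_zero_of_lt h1]
        simp
    rw [Finset.sum_congr rfl hstep2, ← Finset.mul_sum]
    have hm1 : m - 1 + 1 = m := by omega
    have := aux_binom (F := F) (m - 1) c hc
    rw [hm1] at this
    rw [this, mul_zero]

lemma aux_dvd' {F : Type*} [Field F] (α₁ α₂ : F) (hne : α₁ ≠ α₂) (m : ℕ) (hm : 0 < m) (N : ℕ) :
    ((X : F[X]) - C α₁) ^ N ∣
      (X - C α₂) ^ m *
        (∑ p ∈ Finset.range N,
          C ((-1 : F) ^ p * ((m - 1 + p).choose p : F) / (α₁ - α₂) ^ (m + p))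
            * (X - C α₁) ^ p) - 1 := by
  have h := aux_dvd (α₁ - α₂) (sub_ne_zero.mpr hne) m hm N
  have key : ((X : F[X]) - C α₂) ^ m *
        (∑ p ∈ Finset.range N,
          C ((-1 : F) ^ p * ((m - 1 + p).choose p : F) / (α₁ - α₂) ^ (m + p))
            * (X - C α₁) ^ p) - 1
      = aeval ((X : F[X]) - C α₁)
          ((X + C (α₁ - α₂)) ^ m *
            (∑ p ∈ Finset.range N,
              C ((-1 : F) ^ p * ((m - 1 + p).choose p : F) / (α₁ - α₂) ^ (m + p)) * X ^ p) - 1) := by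
    simp only [map_sub, _root_.map_mul, map_pow, map_add, _root_.map_one, map_sum, aeval_X, aeval_C,
      Polynomial.algebraMap_eq]
    have hsub : (X : F[X]) - C α₂ = X - C α₁ + C (α₁ - α₂) := by
      rw [map_sub]; ring
    rw [hsub, map_sub]
  rw [key]
  have h2 := map_dvd (aeval ((X : F[X]) - C α₁)) h
  simpa only [map_pow, aeval_X] using h2






theorem stmt17 {F : Type*} [Field F] [CharZero F] (α₁ α₂ : F) (hne : α₁ ≠ α₂)
    (m₁ m₂ : ℕ) (hm₁ : 0 < m₁) (hm₂ : 0 < m₂) (n : ℕ) (hn : n = m₁ + m₂)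
    (VG : Matrix (Fin n) (Fin m₁ ⊕ Fin m₂) F)
    (hVG : ∀ (r : Fin n) (p : Fin m₁ ⊕ Fin m₂),
      VG r p = Sum.elim
        (fun k : Fin m₁ => ((r : ℕ).choose (k : ℕ) : F) * α₁ ^ ((r : ℕ) - (k : ℕ)))
        (fun k : Fin m₂ => ((r : ℕ).choose (k : ℕ) : F) * α₂ ^ ((r : ℕ) - (k : ℕ))) p) :
    ∀ W : Matrix (Fin m₁ ⊕ Fin m₂) (Fin n) F,
      VG * W = 1 → W * VG = 1 →
        ∀ (i : Fin m₁) (j : Fin n),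
          W (Sum.inl i) j =
            ∑ p ∈ Finset.range (m₁ - (i : ℕ)),
              (-1 : F) ^ (m₂ + (i : ℕ) + (j : ℕ)) *
                ((m₂ + p - 1).choose (m₂ - 1) : F) / (α₁ - α₂) ^ (m₂ + p) *
              ∑ r ∈ Finset.range ((j : ℕ) + 1),
                (((i : ℕ) + p).choose r : F) * (m₂.choose ((j : ℕ) - r) : F) *
                  α₁ ^ (p + (i : ℕ) - r) * α₂ ^ (m₂ + r - (j : ℕ)) := by
  intro W hVW hWV i j
  have hd : α₁ - α₂ ≠ 0 := sub_ne_zero.mpr hne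
  set N : ℕ := m₁ - (i : ℕ) with hN_def
  have hiN : (i : ℕ) + N = m₁ := by have := i.isLt; omega
  have hN1 : 1 ≤ N := by have := i.isLt; omega
  set T : F[X] := ∑ p ∈ Finset.range N,
    C ((-1 : F) ^ p * ((m₂ - 1 + p).choose p : F) / (α₁ - α₂) ^ (m₂ + p)) * (X - C α₁) ^ p
    with hT_def
  set P : F[X] := (X - C α₂) ^ m₂ * ((X - C α₁) ^ (i : ℕ) * T) with hP_def
  -- degree bound
  have hdegT : T.natDegree ≤ N - 1 := by
    apply natDegree_sum_le_of_forall_le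
    intro p hp
    refine natDegree_mul_le.trans ?_
    rw [natDegree_C]
    have : ((X - C α₁) ^ p : F[X]).natDegree ≤ p := by
      refine natDegree_pow_le.trans ?_
      rw [natDegree_X_sub_C, mul_one]
    have hpN : p < N := Finset.mem_range.mp hp
    omega
  have hdegP : P.natDegree < n := by
    have h1 : ((X - C α₁) ^ (i : ℕ) * T : F[X]).natDegree ≤ (i : ℕ) + (N - 1) := by
      refine natDegree_mul_le.trans ?_
      have : (((X - C α₁) : F[X]) ^ (i : ℕ)).natDegree ≤ (i : ℕ) := by
        refine natDegree_pow_le.trans ?_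
        rw [natDegree_X_sub_C, mul_one]
      omega
    have h2 : P.natDegree ≤ m₂ + ((i : ℕ) + (N - 1)) := by
      rw [hP_def]
      refine natDegree_mul_le.trans ?_
      have : (((X - C α₂) : F[X]) ^ m₂).natDegree ≤ m₂ := by
        refine natDegree_pow_le.trans ?_
        rw [natDegree_X_sub_C, mul_one]
      omega
    omega
  -- decomposition of P
  obtain ⟨R, hR⟩ := aux_dvd' α₁ α₂ hne m₂ hm₂ N
  rw [← hT_def] at hR
  have hPd : P = (X - C α₁) ^ (i : ℕ) + (X - C α₁) ^ ((i : ℕ) + N) * R := by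
    calc P = ((X - C α₂) ^ m₂ * T - 1) * (X - C α₁) ^ (i : ℕ) + (X - C α₁) ^ (i : ℕ) := by
            rw [hP_def]; ring
      _ = (X - C α₁) ^ N * R * (X - C α₁) ^ (i : ℕ) + (X - C α₁) ^ (i : ℕ) := by rw [hR]
      _ = _ := by ring
  -- taylor expansions
  have hcomp : ∀ a : F, (taylor a (X - C a) : F[X]) = X := by
    intro a
    rw [taylor_apply, sub_comp, X_comp, C_comp]
    ring
  have htaypow : ∀ (a : F) (q : F[X]) (m : ℕ), taylor a ((X - C a) ^ m * q)
      = X ^ m * taylor a q := by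
    intro a q m
    rw [taylor_mul]
    congr 1
    induction m with
    | zero => simp
    | succ m ih => rw [pow_succ, pow_succ, taylor_mul, ih, hcomp]
  have htay1 : ∀ k : ℕ, k < m₁ → (taylor α₁ P).coeff k = if k = (i : ℕ) then 1 else 0 := by
    intro k hk
    rw [hPd, map_add, coeff_add]
    have t1 : (taylor α₁ ((X - C α₁) ^ (i : ℕ)) : F[X]) = X ^ (i : ℕ) := by
      have := htaypow α₁ 1 (i : ℕ)
      simpa using this
    have t2 : ((taylor α₁ ((X - C α₁) ^ ((i : ℕ) + N) * R) : F[X])).coeff k = 0 := by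
      rw [htaypow]
      refine (Polynomial.X_pow_dvd_iff.mp (dvd_mul_right _ _)) k ?_
      omega
    rw [t1, t2, coeff_X_pow, add_zero]
  have htay2 : ∀ k : ℕ, k < m₂ → (taylor α₂ P).coeff k = 0 := by
    intro k hk
    rw [hP_def, htaypow]
    exact (Polynomial.X_pow_dvd_iff.mp (dvd_mul_right _ _)) k hk
  -- bridge between row sums and taylor coefficients
  have hbridge : ∀ (α : F) (k : ℕ),
      ∑ r ∈ Finset.range n, P.coeff r * ((r.choose k : F) * α ^ (r - k))
        = (taylor α P).coeff k := by
    intro α k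
    rw [taylor_coeff, hasseDeriv_apply, Polynomial.eval_sum,
      Polynomial.sum_over_range' _ (by simp) n hdegP]
    refine Finset.sum_congr rfl fun r _ => ?_
    rw [eval_monomial]
    ring
  -- the row property
  have hrow : ∀ c : Fin m₁ ⊕ Fin m₂, (∑ r : Fin n, P.coeff (r : ℕ) * VG r c)
      = (1 : Matrix (Fin m₁ ⊕ Fin m₂) (Fin m₁ ⊕ Fin m₂) F) (Sum.inl i) c := by
    intro c
    cases c with
    | inl k =>
      have : (∑ r : Fin n, P.coeff (r : ℕ) * VG r (Sum.inl k))
          = ∑ r ∈ Finset.range n, P.coeff r * ((r.choose (k : ℕ) : F) * α₁ ^ (r - (k : ℕ))) := by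
        rw [← Fin.sum_univ_eq_sum_range
          (fun r => P.coeff r * ((r.choose (k : ℕ) : F) * α₁ ^ (r - (k : ℕ)))) n]
        exact Finset.sum_congr rfl fun r _ => by rw [hVG]; rfl
      rw [this, hbridge, htay1 _ k.isLt, Matrix.one_apply]
      by_cases h : (k : ℕ) = (i : ℕ)
      · rw [if_pos h, if_pos (by simp [Fin.ext_iff, h.symm])]
      · rw [if_neg h, if_neg (by simp [Fin.ext_iff]; omega)]
    | inr k =>
      have : (∑ r : Fin n, P.coeff (r : ℕ) * VG r (Sum.inr k))
          = ∑ r ∈ Finset.range n, P.coeff r * ((r.choose (k : ℕ) : F) * α₂ ^ (r - (k : ℕ))) := by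
        rw [← Fin.sum_univ_eq_sum_range
          (fun r => P.coeff r * ((r.choose (k : ℕ) : F) * α₂ ^ (r - (k : ℕ)))) n]
        exact Finset.sum_congr rfl fun r _ => by rw [hVG]; rfl
      rw [this, hbridge, htay2 _ k.isLt, Matrix.one_apply, if_neg (by simp)]
  -- uniqueness: the row of W equals the coefficients of P
  have hWrow : W (Sum.inl i) j = P.coeff (j : ℕ) := by
    have h1 : W (Sum.inl i) j
        = ∑ c, (1 : Matrix (Fin m₁ ⊕ Fin m₂) (Fin m₁ ⊕ Fin m₂) F) (Sum.inl i) c * W c j := by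
      conv_lhs => rw [← Matrix.one_mul W]
      rw [Matrix.mul_apply]
    rw [h1]
    calc ∑ c, (1 : Matrix (Fin m₁ ⊕ Fin m₂) (Fin m₁ ⊕ Fin m₂) F) (Sum.inl i) c * W c j
        = ∑ c, (∑ r : Fin n, P.coeff (r : ℕ) * VG r c) * W c j := by
          exact Finset.sum_congr rfl fun c _ => by rw [hrow]
      _ = ∑ r : Fin n, P.coeff (r : ℕ) * ∑ c, VG r c * W c j := by
          simp_rw [Finset.sum_mul, mul_assoc]
          rw [Finset.sum_comm]
          simp_rw [← Finset.mul_sum]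
      _ = ∑ r : Fin n, P.coeff (r : ℕ) * (VG * W) r j := by
          simp_rw [Matrix.mul_apply]
      _ = ∑ r : Fin n, P.coeff (r : ℕ) * (1 : Matrix (Fin n) (Fin n) F) r j := by rw [hVW]
      _ = P.coeff (j : ℕ) := by
          simp [Matrix.one_apply]
  rw [hWrow]
  have hPsum : P = ∑ p ∈ Finset.range N,
      C ((-1 : F) ^ p * ((m₂ - 1 + p).choose p : F) / (α₁ - α₂) ^ (m₂ + p)) *
        ((X - C α₁) ^ ((i : ℕ) + p) * (X - C α₂) ^ m₂) := by
    rw [hP_def, hT_def, Finset.mul_sum, Finset.mul_sum]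
    refine Finset.sum_congr rfl fun p _ => ?_
    rw [pow_add]
    ring
  rw [hPsum, finset_sum_coeff]
  refine Finset.sum_congr rfl fun p hp => ?_
  rw [coeff_C_mul, Polynomial.coeff_mul, Finset.Nat.sum_antidiagonal_eq_sum_range_succ_mk,
    Finset.mul_sum, Finset.mul_sum]
  refine Finset.sum_congr rfl fun r hr => ?_
  have hrj : r ≤ (j : ℕ) := by have := Finset.mem_range.mp hr; omega
  have hD : ((X : F[X]) - C α₁) = X + C (-α₁) := by rw [map_neg, sub_eq_add_neg]
  have hE : ((X : F[X]) - C α₂) = X + C (-α₂) := by rw [map_neg, sub_eq_add_neg]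
  rw [hD, hE, coeff_X_add_C_pow, coeff_X_add_C_pow]
  by_cases h1 : r ≤ (i : ℕ) + p
  · by_cases h2 : (j : ℕ) ≤ m₂ + r
    · have he2 : m₂ - ((j : ℕ) - r) = m₂ + r - (j : ℕ) := by omega
      have he1 : (i : ℕ) + p - r = p + (i : ℕ) - r := by omega
      have hch : (((m₂ - 1 + p).choose p : ℕ) : F) = (((m₂ + p - 1).choose (m₂ - 1) : ℕ) : F) := by
        norm_cast
        rw [show m₂ - 1 + p = m₂ + p - 1 by omega,
          ← Nat.choose_symm (show p ≤ m₂ + p - 1 by omega)]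
        congr 1
        omega
      rw [he2, he1, hch, neg_pow, neg_pow]
      have hsign : (-1 : F) ^ p * ((-1 : F) ^ (p + (i : ℕ) - r) * (-1 : F) ^ (m₂ + r - (j : ℕ)))
          = (-1 : F) ^ (m₂ + (i : ℕ) + (j : ℕ)) := by
        rw [← pow_add, ← pow_add]
        exact neg_one_pow_congr_aux (by omega)
      linear_combination ((((m₂ + p - 1).choose (m₂ - 1) : ℕ) : F) *
        ((((i : ℕ) + p).choose r : ℕ) : F) * ((m₂.choose ((j : ℕ) - r) : ℕ) : F) *
        α₁ ^ (p + (i : ℕ) - r) * α₂ ^ (m₂ + r - (j : ℕ)) / (α₁ - α₂) ^ (m₂ + p)) * hsign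
    · rw [Nat.choose_eq_zero_of_lt (show m₂ < (j : ℕ) - r by omega)]
      simp
  · rw [Nat.choose_eq_zero_of_lt (show (i : ℕ) + p < r by omega)]
    simp
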